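/- Let F and Ḡ be maps ℝⁿ → ℝⁿ (propagators over one interval starting from a given initial value), let F̄ be a third map, and suppose: (i) ‖F(U) - F̄(U)‖ ≤ δ₁ for all U; (ii) ‖F̄(U) - Ḡ(U)‖ ≤ δ₂ for all U and U ↦ F̄(U) - Ḡ(U) is Lipschitz with constant λ; (iii) Ḡ is Lipschitz with constant β. Then for any exact value u*, previous iterate V, and current iterate W, the Parareal update U⁺ := F(V) + Ḡ(W) - Ḡ(V) satisfies ‖u* - U⁺‖ ≤ λ‖u* - V‖ + 2δ₁ + β‖u* - W‖, where u* = F(u*₋) with u*₋ the exact starting value (i.e. u* is the exact propagated value from the exact initial condition). -/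

import Mathlib

/-- abstract one-step Parareal error estimate.
U⁺ = F(V) + Ḡ(W) − Ḡ(V), u* = F(u*₋):
‖u* − U⁺‖ ≤ λ‖u*₋ − V‖ + 2δ₁ + β‖u*₋ − W‖. -/
theorem parareal_one_step_estimate {n : ℕ}
    (F Fbar Gbar : EuclideanSpace ℝ (Fin n) → EuclideanSpace ℝ (Fin n))
    (δ₁ δ₂ lam β : ℝ)
    (h1 : ∀ U, ‖F U - Fbar U‖ ≤ δ₁)
    (h2 : ∀ U, ‖Fbar U - Gbar U‖ ≤ δ₂)
    (h2lip : ∀ U V, ‖(Fbar U - Gbar U) - (Fbar V - Gbar V)‖ ≤ lam * ‖U - V‖)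
    (h3 : ∀ U V, ‖Gbar U - Gbar V‖ ≤ β * ‖U - V‖)
    (ustarm V W : EuclideanSpace ℝ (Fin n)) :
    ‖F ustarm - (F V + Gbar W - Gbar V)‖ ≤
      lam * ‖ustarm - V‖ + 2 * δ₁ + β * ‖ustarm - W‖ := by
  have key : F ustarm - (F V + Gbar W - Gbar V) =
      ((F ustarm - Fbar ustarm) - (F V - Fbar V))
      + ((Fbar ustarm - Gbar ustarm) - (Fbar V - Gbar V))
      + (Gbar ustarm - Gbar W) := by abel
  rw [key]
  have t1 : ‖(F ustarm - Fbar ustarm) - (F V - Fbar V)‖ ≤ δ₁ + δ₁ :=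
    (norm_sub_le _ _).trans (add_le_add (h1 _) (h1 _))
  calc _ ≤ ‖(F ustarm - Fbar ustarm) - (F V - Fbar V)
            + ((Fbar ustarm - Gbar ustarm) - (Fbar V - Gbar V))‖
            + ‖Gbar ustarm - Gbar W‖ := norm_add_le _ _
    _ ≤ (‖(F ustarm - Fbar ustarm) - (F V - Fbar V)‖
            + ‖(Fbar ustarm - Gbar ustarm) - (Fbar V - Gbar V)‖)
            + ‖Gbar ustarm - Gbar W‖ :=
          add_le_add (norm_add_le _ _) le_rfl
    _ ≤ ((δ₁ + δ₁) + lam * ‖ustarm - V‖) + β * ‖ustarm - W‖ :=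
          add_le_add (add_le_add t1 (h2lip _ _)) (h3 _ _)
    _ = lam * ‖ustarm - V‖ + 2 * δ₁ + β * ‖ustarm - W‖ := by ring
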